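/- arXiv:1311.3013 — 2 statements merged into one kernel-verified Lean document; each statement's English description precedes it below -/
import Mathlib

section
/- (Collapse theorem) Let T be a uniform L_{ω·ω}-theory. For any positive integer n and any L_{ω·ω}-formula φ with On(φ) ⊆ ω·n, T ⊨ φ if and only if T∩(ω·n) ⊨ φ. -/
namespace FCT

/-- Terms of the language `L_PA = (0, S, +, ·)`.  Variables are indexed by `ℕ`. -/
inductive Term : Type where
  | var : ℕ → Term
  | zero : Term
  | succ : Term → Term
  | add : Term → Term → Term
  | mul : Term → Term → Term

/-- Formulas of `L_PA` extended by a family of unary operators indexed by `Op`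
(the base logic).  `op K φ` is the formula `Kφ`. -/
inductive Formula (Op : Type) : Type where
  | eq : Term → Term → Formula Op
  | imp : Formula Op → Formula Op → Formula Op
  | not : Formula Op → Formula Op
  | all : ℕ → Formula Op → Formula Op
  | op : Op → Formula Op → Formula Op

/-- The ordinals below `ω·ω`, encoded as pairs: `(a, b)` represents `ω·a + b`,
with the lexicographic order. -/
abbrev Ord2 : Type := ℕ ×ₗ ℕ

/-- The ordinal `ω·a + b` as an element of `Ord2`. -/
def omul (a b : ℕ) : Ord2 := toLex (a, b)

/-- Formulas of `L_EA`: one operator `K`. -/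
abbrev LEA : Type := Formula Unit

/-- Formulas of `L_{ω·ω}`: operators `K^α` for `α < ω·ω`. -/
abbrev LOO : Type := Formula Ord2

/-- `Kφ` in `L_EA`. -/
def KK (φ : LEA) : LEA := .op () φ

/-- Variables occurring in a term. -/
def Term.vars : Term → Set ℕ
  | .var x => {x}
  | .zero => ∅
  | .succ t => t.vars
  | .add t u => t.vars ∪ u.vars
  | .mul t u => t.vars ∪ u.vars

/-- Free variables of a formula (`FV(Kφ) = FV(φ)`). -/
def Formula.free {Op : Type} : Formula Op → Set ℕ
  | .eq t u => t.vars ∪ u.vars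
  | .imp φ ψ => φ.free ∪ ψ.free
  | .not φ => φ.free
  | .all x φ => φ.free \ {x}
  | .op _ φ => φ.free

/-- A sentence is a formula with no free variables. -/
def Formula.IsSentence {Op : Type} (φ : Formula Op) : Prop := φ.free = ∅

/-- A theory is a set of sentences. -/
def IsTheory {Op : Type} (T : Set (Formula Op)) : Prop := ∀ φ ∈ T, φ.IsSentence

/-- Substitution of the term `u` for the variable `x` in a term. -/
def Term.subst (x : ℕ) (u : Term) : Term → Term
  | .var y => if y = x then u else .var y
  | .zero => .zero
  | .succ t => .succ (Term.subst x u t)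
  | .add t₁ t₂ => .add (Term.subst x u t₁) (Term.subst x u t₂)
  | .mul t₁ t₂ => .mul (Term.subst x u t₁) (Term.subst x u t₂)

/-- Substitution `φ(x|u)` of the term `u` for all free occurrences of `x` in `φ`. -/
def Formula.subst {Op : Type} (x : ℕ) (u : Term) : Formula Op → Formula Op
  | .eq t₁ t₂ => .eq (Term.subst x u t₁) (Term.subst x u t₂)
  | .imp φ ψ => .imp (Formula.subst x u φ) (Formula.subst x u ψ)
  | .not φ => .not (Formula.subst x u φ)
  | .all y φ => if y = x then .all y φ else .all y (Formula.subst x u φ)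
  | .op K φ => .op K (Formula.subst x u φ)

/-- The term `u` is substitutable for the variable `x` in the formula. -/
def Formula.Substitutable {Op : Type} (x : ℕ) (u : Term) : Formula Op → Prop
  | .eq _ _ => True
  | .imp φ ψ => φ.Substitutable x u ∧ ψ.Substitutable x u
  | .not φ => φ.Substitutable x u
  | .all y φ => x = y ∨ x ∉ φ.free ∨ (y ∉ u.vars ∧ φ.Substitutable x u)
  | .op _ φ => φ.Substitutable x u

/-- Matching of two variables relative to a list of pairs of renamed bound variables. -/
def varMatch : List (ℕ × ℕ) → ℕ → ℕ → Prop
  | [], x, y => x = y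
  | (a, b) :: ρ, x, y => (x = a ∧ y = b) ∨ (x ≠ a ∧ y ≠ b ∧ varMatch ρ x y)

/-- Alphabetic matching of terms relative to a list of pairs of renamed bound variables. -/
def Term.alpha (ρ : List (ℕ × ℕ)) : Term → Term → Prop
  | .var x, .var y => varMatch ρ x y
  | .zero, .zero => True
  | .succ t, .succ u => t.alpha ρ u
  | .add t₁ t₂, .add u₁ u₂ => t₁.alpha ρ u₁ ∧ t₂.alpha ρ u₂
  | .mul t₁ t₂, .mul u₁ u₂ => t₁.alpha ρ u₁ ∧ t₂.alpha ρ u₂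
  | _, _ => False

/-- Alphabetic matching of formulas relative to a list of pairs of renamed bound variables. -/
def Formula.alpha {Op : Type} (ρ : List (ℕ × ℕ)) : Formula Op → Formula Op → Prop
  | .eq t₁ t₂, .eq u₁ u₂ => t₁.alpha ρ u₁ ∧ t₂.alpha ρ u₂
  | .imp φ₁ φ₂, .imp ψ₁ ψ₂ => φ₁.alpha ρ ψ₁ ∧ φ₂.alpha ρ ψ₂
  | .not φ, .not ψ => φ.alpha ρ ψ
  | .all x φ, .all y ψ => φ.alpha ((x, y) :: ρ) ψ
  | .op K φ, .op K' ψ => K = K' ∧ φ.alpha ρ ψ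
  | _, _ => False

/-- `ψ` is an alphabetic variant of `φ`: it is obtained from `φ` by renaming
bound variables while respecting the binding of the quantifiers. -/
def Formula.AlphaVariant {Op : Type} (φ ψ : Formula Op) : Prop := φ.alpha [] ψ

/-- The data of a structure for the base logic over `L_PA` extended by the
operators `Op`: a first-order part together with a truth valuation
`opSat K φ s` ("`M ⊨ Kφ[s]`") for operator-prefixed formulas. -/
structure PreStruc (Op : Type) : Type 1 where
  U : Type
  zero : U
  succ : U → U
  add : U → U → U
  mul : U → U → U
  opSat : Op → Formula Op → (ℕ → U) → Prop

/-- Evaluation of terms. -/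
def Term.eval {Op : Type} (M : PreStruc Op) (s : ℕ → M.U) : Term → M.U
  | .var x => s x
  | .zero => M.zero
  | .succ t => M.succ (t.eval M s)
  | .add t u => M.add (t.eval M s) (u.eval M s)
  | .mul t u => M.mul (t.eval M s) (u.eval M s)

/-- Satisfaction `M ⊨ φ[s]`: as in first-order logic on non-operator formulas,
and given by `opSat` on operator-prefixed formulas. -/
def Sat {Op : Type} (M : PreStruc Op) : Formula Op → (ℕ → M.U) → Prop
  | .eq t u, s => t.eval M s = u.eval M s
  | .imp φ ψ, s => Sat M φ s → Sat M ψ s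
  | .not φ, s => ¬ Sat M φ s
  | .all x φ, s => ∀ a : M.U, Sat M φ (Function.update s x a)
  | .op K φ, s => M.opSat K φ s

/-- `M` is a genuine structure of the base logic: its operator valuation
(1) depends only on the values of the assignment on the free variables,
(2) is invariant under renaming of bound variables, and
(3) satisfies weak substitution. -/
def IsStruc {Op : Type} (M : PreStruc Op) : Prop :=
  (∀ (K : Op) (φ : Formula Op) (s t : ℕ → M.U),
      (∀ x ∈ φ.free, s x = t x) → (M.opSat K φ s ↔ M.opSat K φ t)) ∧
  (∀ (K : Op) (φ ψ : Formula Op) (s : ℕ → M.U),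
      φ.AlphaVariant ψ → (M.opSat K φ s ↔ M.opSat K ψ s)) ∧
  (∀ (K : Op) (φ : Formula Op) (x y : ℕ) (s : ℕ → M.U),
      φ.Substitutable x (.var y) →
      (M.opSat K (φ.subst x (.var y)) s ↔ M.opSat K φ (Function.update s x (s y))))

/-- A formula is valid if it holds in every structure under every assignment. -/
def Valid {Op : Type} (φ : Formula Op) : Prop :=
  ∀ M : PreStruc Op, IsStruc M → ∀ s : ℕ → M.U, Sat M φ s

/-- `T ⊨ φ`: every structure satisfying all members of `T` (under every
assignment) satisfies `φ` under every assignment. -/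
def Models {Op : Type} (T : Set (Formula Op)) (φ : Formula Op) : Prop :=
  ∀ M : PreStruc Op, IsStruc M → (∀ ψ ∈ T, ∀ s : ℕ → M.U, Sat M ψ s) →
    ∀ s : ℕ → M.U, Sat M φ s

/-- `M ⊨ T`. -/
def SatTheory {Op : Type} (M : PreStruc Op) (T : Set (Formula Op)) : Prop :=
  ∀ φ ∈ T, ∀ s : ℕ → M.U, Sat M φ s

/-- The numeral `n̄`. -/
def numeral : ℕ → Term
  | 0 => .zero
  | n + 1 => .succ (numeral n)

/-- Helper for `φ^s`: replace every free occurrence of a variable `x` not in the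
list `B` of bound variables by the numeral for `s x`. -/
def Term.numSub (s : ℕ → ℕ) (B : List ℕ) : Term → Term
  | .var x => if x ∈ B then .var x else numeral (s x)
  | .zero => .zero
  | .succ t => .succ (t.numSub s B)
  | .add t u => .add (t.numSub s B) (u.numSub s B)
  | .mul t u => .mul (t.numSub s B) (u.numSub s B)

/-- Helper for `φ^s` (carrying the list of bound variables). -/
def Formula.numSub {Op : Type} (s : ℕ → ℕ) : List ℕ → Formula Op → Formula Op
  | B, .eq t u => .eq (t.numSub s B) (u.numSub s B)
  | B, .imp φ ψ => .imp (φ.numSub s B) (ψ.numSub s B)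
  | B, .not φ => .not (φ.numSub s B)
  | B, .all x φ => .all x (φ.numSub s (x :: B))
  | B, .op K φ => .op K (φ.numSub s B)

/-- `φ^s`: the sentence obtained by substituting the numeral for `s x` for each
free occurrence of each variable `x` in `φ`. -/
def assignSub {Op : Type} (s : ℕ → ℕ) (φ : Formula Op) : Formula Op :=
  φ.numSub s []

/-- The intended structure `𝒩_T` of an `L_EA`-theory `T`: standard first-order
part and `𝒩_T ⊨ Kφ[s]` iff `T ⊨ φ^s`. -/
def NStruc (T : Set LEA) : PreStruc Unit where
  U := ℕ
  zero := 0
  succ := Nat.succ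
  add := (· + ·)
  mul := (· * ·)
  opSat := fun _ φ s => Models T (assignSub s φ)

/-- `T` is true: `𝒩_T ⊨ T`. -/
def TheoryTrue (T : Set LEA) : Prop := SatTheory (NStruc T) T

/-- `On(φ)`: the set of `α < ω·ω` such that `K^α` occurs in `φ`. -/
def Formula.On : LOO → Set Ord2
  | .eq _ _ => ∅
  | .imp φ ψ => φ.On ∪ ψ.On
  | .not φ => φ.On
  | .all _ φ => φ.On
  | .op α φ => insert α φ.On

/-- `T ∩ α`: the members of `T` all of whose superscripts are `< α`. -/
def cut (T : Set LOO) (α : Ord2) : Set LOO := {φ | φ ∈ T ∧ ∀ β ∈ φ.On, β < α}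

/-- The intended structure `𝓜_T` of an `L_{ω·ω}`-theory `T`: standard
first-order part and `𝓜_T ⊨ K^αφ[s]` iff `T∩α ⊨ φ^s`. -/
def MStruc (T : Set LOO) : PreStruc Ord2 where
  U := ℕ
  zero := 0
  succ := Nat.succ
  add := (· + ·)
  mul := (· * ·)
  opSat := fun α φ s => Models (cut T α) (assignSub s φ)

/-- The least element of a set `A ⊆ ω·ω` (junk value if `A` is empty):
first minimize the `ω`-coefficient, then the finite part. -/
noncomputable def leastIn (A : Set Ord2) : Ord2 :=
  let a := sInf {a : ℕ | ∃ b : ℕ, toLex (a, b) ∈ A}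
  toLex (a, sInf {b : ℕ | toLex (a, b) ∈ A})

/-- The stratifier given by `X ⊆ ω·ω`: fixes atomic formulas, commutes with
`→`, `¬`, `∀`, and sends `Kφ₀` to `K^α φ₀⁺` where `α` is the least element of
`X \ On(φ₀⁺)`. -/
noncomputable def stratify (X : Set Ord2) : LEA → LOO
  | .eq t u => .eq t u
  | .imp φ ψ => .imp (stratify X φ) (stratify X ψ)
  | .not φ => .not (stratify X φ)
  | .all x φ => .all x (stratify X φ)
  | .op _ φ => .op (leastIn (X \ (stratify X φ).On)) (stratify X φ)

/-- A stratifier is the map given by some infinite `X ⊆ ω·ω`. -/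
def IsStratifier (f : LEA → LOO) : Prop :=
  ∃ X : Set Ord2, X.Infinite ∧ f = stratify X

/-- `T^⊕ = { φ⁺ : φ ∈ T, ⁺ a stratifier }`. -/
def oplus (T : Set LEA) : Set LOO :=
  {ψ | ∃ φ ∈ T, ∃ f : LEA → LOO, IsStratifier f ∧ ψ = f φ}

/-- The veristratifier: the stratifier given by `X = {ω·1, ω·2, ω·3, …}`. -/
noncomputable def veristratifier : LEA → LOO :=
  stratify {α : Ord2 | ∃ n : ℕ, α = omul (n + 1) 0}

/-- `φ⁻`: change every `K^α` into `K`. -/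
def Formula.down : LOO → LEA
  | .eq t u => .eq t u
  | .imp φ ψ => .imp φ.down ψ.down
  | .not φ => .not φ.down
  | .all x φ => .all x φ.down
  | .op _ φ => .op () φ.down

/-- `M⁺` for an `L_{ω·ω}`-structure `M` and a stratifier `⁺`: same universe and
`L_PA`-part, and `M⁺ ⊨ Kφ[s]` iff `M ⊨ (Kφ)⁺[s]`. -/
def upStruc (M : PreStruc Ord2) (f : LEA → LOO) : PreStruc Unit where
  U := M.U
  zero := M.zero
  succ := M.succ
  add := M.add
  mul := M.mul
  opSat := fun _ φ s => Sat M (f (.op () φ)) s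

/-- `M⁻` for an `L_EA`-structure `M`: same universe and `L_PA`-part, and
`M⁻ ⊨ K^αφ[s]` iff `M ⊨ K(φ⁻)[s]`. -/
def downStruc (M : PreStruc Unit) : PreStruc Ord2 where
  U := M.U
  zero := M.zero
  succ := M.succ
  add := M.add
  mul := M.mul
  opSat := fun _ φ s => Sat M (.op () φ.down) s

open Classical in
/-- `h(φ)`: replace every occurrence of `K^α` with `α ∈ X` by `K^{h(α)}`. -/
noncomputable def mapOps (X : Set Ord2) (h : Ord2 → Ord2) : LOO → LOO
  | .eq t u => .eq t u
  | .imp φ ψ => .imp (mapOps X h φ) (mapOps X h ψ)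
  | .not φ => .not (mapOps X h φ)
  | .all x φ => .all x (mapOps X h φ)
  | .op α φ => .op (if α ∈ X then h α else α) (mapOps X h φ)

/-- `h : X → ω·ω` is order preserving. -/
def OrdPresOn (X : Set Ord2) (h : Ord2 → Ord2) : Prop :=
  ∀ a ∈ X, ∀ b ∈ X, a < b → h a < h b

/-- A uniform `L_{ω·ω}`-theory. -/
def Uniform (T : Set LOO) : Prop :=
  ∀ (X : Set Ord2) (h : Ord2 → Ord2), OrdPresOn X h →
    ∀ φ ∈ T, φ.On ⊆ X → mapOps X h φ ∈ T

/-- `h(M)`: same universe and `L_PA`-part as `M`, and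
`h(M) ⊨ K^αφ[s]` iff `M ⊨ h(K^αφ)[s]`. -/
noncomputable def hStruc (X : Set Ord2) (h : Ord2 → Ord2) (M : PreStruc Ord2) :
    PreStruc Ord2 where
  U := M.U
  zero := M.zero
  succ := M.succ
  add := M.add
  mul := M.mul
  opSat := fun α φ s => Sat M (mapOps X h (.op α φ)) s

/-- The depth of nesting of the operators. -/
def Formula.depth {Op : Type} : Formula Op → ℕ
  | .eq _ _ => 0
  | .imp φ ψ => max φ.depth ψ.depth
  | .not φ => φ.depth
  | .all _ φ => φ.depth
  | .op _ φ => φ.depth + 1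

/-- `∀x₁ ⋯ ∀xₙ φ`. -/
def Formula.alls {Op : Type} : List ℕ → Formula Op → Formula Op
  | [], φ => φ
  | x :: l, φ => .all x (Formula.alls l φ)

/-- `ψ` is a universal closure of `φ`: a sentence of the form `∀x₁ ⋯ ∀xₙ φ`. -/
def IsUClosure {Op : Type} (φ ψ : Formula Op) : Prop :=
  ψ.IsSentence ∧ ∃ l : List ℕ, ψ = Formula.alls l φ

/-- The schema `E₁`: universal closures of `Kφ`, `φ` valid. -/
def E1 : Set LEA := {χ | ∃ φ : LEA, Valid φ ∧ IsUClosure (KK φ) χ}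

/-- The schema `E₂`: universal closures of `K(φ→ψ) → Kφ → Kψ`. -/
def E2 : Set LEA :=
  {χ | ∃ φ ψ : LEA, IsUClosure (.imp (KK (.imp φ ψ)) (.imp (KK φ) (KK ψ))) χ}

/-- The schema `E′₂`: universal closures of `K(φ→ψ) → Kφ → Kψ` with
`depth(φ) ≤ depth(ψ)`. -/
def E2' : Set LEA :=
  {χ | ∃ φ ψ : LEA, φ.depth ≤ ψ.depth ∧
    IsUClosure (.imp (KK (.imp φ ψ)) (.imp (KK φ) (KK ψ))) χ}

/-- The schema `E₃`: universal closures of `Kφ → φ`. -/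
def E3 : Set LEA := {χ | ∃ φ : LEA, IsUClosure (.imp (KK φ) φ) χ}

/-- The Assigned Validity schema: all `φ^s` with `φ` valid, `s : ℕ → ℕ`. -/
def AssignedValidity : Set LEA :=
  {χ | ∃ (φ : LEA) (s : ℕ → ℕ), Valid φ ∧ χ = assignSub s φ}

/-- `K(T₀) = { Kφ : φ ∈ T₀ }`. -/
def KSet (T : Set LEA) : Set LEA := {χ | ∃ φ ∈ T, χ = KK φ}

/-- Membership in the smallest `K`-closed set containing `S`. -/
inductive KClosureMem (S : Set LEA) : LEA → Prop
  | base {φ : LEA} : φ ∈ S → KClosureMem S φ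
  | k {φ : LEA} : KClosureMem S φ → KClosureMem S (KK φ)

/-- The smallest `K`-closed theory containing `S`. -/
def KClosure (S : Set LEA) : Set LEA := {φ | KClosureMem S φ}

/-- `T₀` is upgeneric: `𝓜_{T^⊕} ⊨ T₀^⊕` for every `L_EA`-theory `T ⊇ T₀`. -/
def Upgeneric (T₀ : Set LEA) : Prop :=
  ∀ T : Set LEA, IsTheory T → T₀ ⊆ T → SatTheory (MStruc (oplus T)) (oplus T₀)

/-- A concrete Gödel numbering of terms. -/
def encodeTerm : Term → ℕ
  | .var x => Nat.pair 0 x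
  | .zero => Nat.pair 1 0
  | .succ t => Nat.pair 2 (encodeTerm t)
  | .add t u => Nat.pair 3 (Nat.pair (encodeTerm t) (encodeTerm u))
  | .mul t u => Nat.pair 4 (Nat.pair (encodeTerm t) (encodeTerm u))

/-- A concrete Gödel numbering of `L_EA`-formulas. -/
def encodeLEA : LEA → ℕ
  | .eq t u => Nat.pair 0 (Nat.pair (encodeTerm t) (encodeTerm u))
  | .imp φ ψ => Nat.pair 1 (Nat.pair (encodeLEA φ) (encodeLEA ψ))
  | .not φ => Nat.pair 2 (encodeLEA φ)
  | .all x φ => Nat.pair 3 (Nat.pair x (encodeLEA φ))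
  | .op _ φ => Nat.pair 4 (encodeLEA φ)

/-- `T` is recursively enumerable: the set of Gödel numbers of its members is r.e. -/
def RETheory (T : Set LEA) : Prop := REPred fun n => ∃ φ ∈ T, encodeLEA φ = n

/-- `T₀` is r.e.-upgeneric: `T₀` is r.e. and `𝓜_{T^⊕} ⊨ T₀^⊕` for every r.e.
`L_EA`-theory `T ⊇ T₀`. -/
def REUpgeneric (T₀ : Set LEA) : Prop :=
  RETheory T₀ ∧
    ∀ T : Set LEA, IsTheory T → RETheory T → T₀ ⊆ T →
      SatTheory (MStruc (oplus T)) (oplus T₀)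

/-! ### Auxiliary material for the collapse theorem -/

section CollapseAux

open Classical

lemma Term.vars_finite (t : Term) : t.vars.Finite := by
  induction t with
  | var x => simp [Term.vars]
  | zero => simp [Term.vars]
  | succ t ih => simpa [Term.vars] using ih
  | add t u ih1 ih2 => simpa [Term.vars] using ih1.union ih2
  | mul t u ih1 ih2 => simpa [Term.vars] using ih1.union ih2

lemma Formula.free_finite {Op : Type} (φ : Formula Op) : φ.free.Finite := by
  induction φ with
  | eq t u => simpa [Formula.free] using (Term.vars_finite t).union (Term.vars_finite u)
  | imp φ ψ ih1 ih2 => simpa [Formula.free] using ih1.union ih2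
  | not φ ih => simpa [Formula.free] using ih
  | all x φ ih => simpa [Formula.free] using ih.diff
  | op K φ ih => simpa [Formula.free] using ih

/-- `On` as a `Finset`. -/
def Formula.onFin : LOO → Finset Ord2
  | .eq _ _ => ∅
  | .imp φ ψ => φ.onFin ∪ ψ.onFin
  | .not φ => φ.onFin
  | .all _ φ => φ.onFin
  | .op α φ => insert α φ.onFin

lemma Formula.coe_onFin (φ : LOO) : (φ.onFin : Set Ord2) = φ.On := by
  induction φ with
  | eq t u => simp [Formula.onFin, Formula.On]
  | imp φ ψ ih1 ih2 => simp [Formula.onFin, Formula.On, ih1, ih2]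
  | not φ ih => simpa [Formula.onFin, Formula.On] using ih
  | all x φ ih => simpa [Formula.onFin, Formula.On] using ih
  | op α φ ih => simp [Formula.onFin, Formula.On, ih]

lemma Formula.mem_onFin {β : Ord2} {φ : LOO} : β ∈ φ.onFin ↔ β ∈ φ.On := by
  rw [← Formula.coe_onFin]; simp

lemma mapOps_eq_univ {X : Set Ord2} {h : Ord2 → Ord2} {ψ : LOO} (hsub : ψ.On ⊆ X) :
    mapOps X h ψ = mapOps Set.univ h ψ := by
  induction ψ with
  | eq t u => rfl
  | imp φ χ ih1 ih2 =>
    have h12 := Set.union_subset_iff.mp hsub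
    simp [mapOps, ih1 h12.1, ih2 h12.2]
  | not φ ih => simp [mapOps, ih hsub]
  | all x φ ih => simp [mapOps, ih hsub]
  | op α φ ih =>
    have hα : α ∈ X := hsub (Set.mem_insert _ _)
    have hφ : φ.On ⊆ X := fun β hβ => hsub (Set.mem_insert_of_mem _ hβ)
    simp [mapOps, if_pos hα, ih hφ]

lemma On_mapOps {h : Ord2 → Ord2} (ψ : LOO) :
    (mapOps Set.univ h ψ).On ⊆ h '' ψ.On := by
  induction ψ with
  | eq t u => simp [mapOps, Formula.On]
  | imp φ χ ih1 ih2 =>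
    simp only [mapOps, Formula.On]
    exact Set.union_subset (ih1.trans (Set.image_mono Set.subset_union_left))
      (ih2.trans (Set.image_mono Set.subset_union_right))
  | not φ ih => simpa [mapOps, Formula.On] using ih
  | all x φ ih => simpa [mapOps, Formula.On] using ih
  | op α φ ih =>
    simp only [mapOps, Formula.On, if_pos (Set.mem_univ α)]
    intro β hβ
    rcases hβ with hβ | hβ
    · exact ⟨α, Set.mem_insert _ _, hβ.symm⟩
    · obtain ⟨γ, hγ, hγ2⟩ := ih hβ
      exact ⟨γ, Set.mem_insert_of_mem _ hγ, hγ2⟩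

lemma mapOps_fix {h : Ord2 → Ord2} {ψ : LOO} (hfix : ∀ β ∈ ψ.On, h β = β) :
    mapOps Set.univ h ψ = ψ := by
  induction ψ with
  | eq t u => rfl
  | imp φ χ ih1 ih2 =>
    have h1 : ∀ β ∈ φ.On, h β = β := fun β hβ => hfix β (Or.inl hβ)
    have h2 : ∀ β ∈ χ.On, h β = β := fun β hβ => hfix β (Or.inr hβ)
    simp [mapOps, ih1 h1, ih2 h2]
  | not φ ih => simp [mapOps, ih hfix]
  | all x φ ih => simp [mapOps, ih hfix]
  | op α φ ih =>
    have h1 : ∀ β ∈ φ.On, h β = β := fun β hβ => hfix β (Set.mem_insert_of_mem _ hβ)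
    simp [mapOps, ih h1, hfix α (Set.mem_insert _ _)]

lemma free_mapOps (X : Set Ord2) (h : Ord2 → Ord2) (ψ : LOO) :
    (mapOps X h ψ).free = ψ.free := by
  induction ψ with
  | eq t u => rfl
  | imp φ χ ih1 ih2 => simp [mapOps, Formula.free, ih1, ih2]
  | not φ ih => simp [mapOps, Formula.free, ih]
  | all x φ ih => simp [mapOps, Formula.free, ih]
  | op α φ ih => simp [mapOps, Formula.free, ih]

lemma alpha_mapOps (X : Set Ord2) (h : Ord2 → Ord2) :
    ∀ (ψ χ : LOO) (ρ : List (ℕ × ℕ)), Formula.alpha ρ ψ χ →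
      Formula.alpha ρ (mapOps X h ψ) (mapOps X h χ) := by
  intro ψ
  induction ψ with
  | eq t u => intro χ ρ hα; cases χ <;> simp_all [Formula.alpha, mapOps]
  | imp φ₁ φ₂ ih1 ih2 =>
    intro χ ρ hα; cases χ <;> simp_all [Formula.alpha, mapOps]
  | not φ ih =>
    intro χ ρ hα; cases χ <;> simp_all [Formula.alpha, mapOps]
  | all x φ ih =>
    intro χ ρ hα; cases χ <;> simp_all [Formula.alpha, mapOps]
  | op α φ ih =>
    intro χ ρ hα; cases χ <;> simp_all [Formula.alpha, mapOps]

lemma subst_mapOps (X : Set Ord2) (h : Ord2 → Ord2) (x : ℕ) (u : Term) (ψ : LOO) :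
    mapOps X h (ψ.subst x u) = (mapOps X h ψ).subst x u := by
  induction ψ with
  | eq t₁ t₂ => rfl
  | imp φ χ ih1 ih2 => simp [mapOps, Formula.subst, ih1, ih2]
  | not φ ih => simp [mapOps, Formula.subst, ih]
  | all y φ ih =>
    by_cases hy : y = x <;> simp [mapOps, Formula.subst, hy, ih]
  | op α φ ih => simp [mapOps, Formula.subst, ih]

lemma substitutable_mapOps (X : Set Ord2) (h : Ord2 → Ord2) {x : ℕ} {u : Term} :
    ∀ {ψ : LOO}, ψ.Substitutable x u → (mapOps X h ψ).Substitutable x u := by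
  intro ψ
  induction ψ with
  | eq t₁ t₂ => intro _; trivial
  | imp φ χ ih1 ih2 =>
    intro hs; exact ⟨ih1 hs.1, ih2 hs.2⟩
  | not φ ih => intro hs; exact ih hs
  | all y φ ih =>
    intro hs
    rcases hs with hs | hs | hs
    · exact Or.inl hs
    · exact Or.inr (Or.inl (by rwa [free_mapOps]))
    · exact Or.inr (Or.inr ⟨hs.1, ih hs.2⟩)
  | op α φ ih => intro hs; exact ih hs

lemma eval_hStruc (X : Set Ord2) (h : Ord2 → Ord2) (M : PreStruc Ord2)
    (s : ℕ → M.U) (t : Term) :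
    Term.eval (hStruc X h M) s t = Term.eval M s t := by
  induction t with
  | var x => rfl
  | zero => rfl
  | succ t ih =>
    show M.succ (Term.eval (hStruc X h M) s t) = M.succ (Term.eval M s t)
    rw [ih]
  | add t u ih1 ih2 =>
    show M.add (Term.eval (hStruc X h M) s t) (Term.eval (hStruc X h M) s u)
      = M.add (Term.eval M s t) (Term.eval M s u)
    rw [ih1, ih2]
  | mul t u ih1 ih2 =>
    show M.mul (Term.eval (hStruc X h M) s t) (Term.eval (hStruc X h M) s u)
      = M.mul (Term.eval M s t) (Term.eval M s u)
    rw [ih1, ih2]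

lemma Sat_hStruc (X : Set Ord2) (h : Ord2 → Ord2) (M : PreStruc Ord2) (ψ : LOO) :
    ∀ s : ℕ → M.U, Sat (hStruc X h M) ψ s ↔ Sat M (mapOps X h ψ) s := by
  induction ψ with
  | eq t u => intro s; simp [Sat, mapOps, eval_hStruc]; exact Iff.rfl
  | imp φ χ ih1 ih2 => intro s; simp [Sat, mapOps, ih1 s, ih2 s]
  | not φ ih => intro s; simp [Sat, mapOps, ih s]
  | all x φ ih =>
    intro s
    show (∀ a : M.U, Sat (hStruc X h M) φ (Function.update s x a)) ↔ _
    exact forall_congr' fun a => ih (Function.update s x a)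
  | op α φ => intro s; exact Iff.rfl

lemma isStruc_hStruc (X : Set Ord2) (h : Ord2 → Ord2) {M : PreStruc Ord2}
    (hM : IsStruc M) : IsStruc (hStruc X h M) := by
  obtain ⟨h1, h2, h3⟩ := hM
  refine ⟨?_, ?_, ?_⟩
  · intro K χ s t hst
    show M.opSat _ (mapOps X h χ) s ↔ M.opSat _ (mapOps X h χ) t
    exact h1 _ (mapOps X h χ) s t (by rw [free_mapOps]; exact hst)
  · intro K χ χ' s hv
    show M.opSat _ (mapOps X h χ) s ↔ M.opSat _ (mapOps X h χ') s
    exact h2 _ _ _ s (alpha_mapOps X h χ χ' [] hv)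
  · intro K χ x y s hsub
    show M.opSat _ (mapOps X h (χ.subst x (.var y))) s ↔
      M.opSat _ (mapOps X h χ) (Function.update s x (s y))
    rw [subst_mapOps]
    exact h3 _ (mapOps X h χ) x y s (substitutable_mapOps X h hsub)

end CollapseAux

section UProd

open Filter

variable {J : Type} (M : PreStruc Ord2) (𝒰 : Ultrafilter J) (f : J → Ord2 → Ord2)

/-- The setoid of `𝒰`-a.e. equality. -/
def uSetoid : Setoid (J → M.U) where
  r a b := ∀ᶠ j in (𝒰 : Filter J), a j = b j
  iseqv := ⟨fun _ => Filter.Eventually.of_forall fun _ => rfl,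
    fun h => h.mono fun _ e => e.symm,
    fun h1 h2 => (h1.and h2).mono fun _ e => e.1.trans e.2⟩

/-- The ultraproduct of the structures `hStruc Set.univ (f j) M`. -/
noncomputable def uStruc : PreStruc Ord2 where
  U := Quotient (uSetoid M 𝒰)
  zero := Quotient.mk _ fun _ => M.zero
  succ q := Quotient.liftOn q (fun a => Quotient.mk _ fun j => M.succ (a j))
    fun a b hab => Quotient.sound
      ((show ∀ᶠ j in (𝒰 : Filter J), a j = b j from hab).mono fun j e => show M.succ (a j) = M.succ (b j) by rw [e])
  add q r := Quotient.liftOn₂ q r (fun a b => Quotient.mk _ fun j => M.add (a j) (b j))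
    fun a b a' b' ha hb => Quotient.sound
      (((show ∀ᶠ j in (𝒰 : Filter J), a j = a' j from ha).and
        (show ∀ᶠ j in (𝒰 : Filter J), b j = b' j from hb)).mono
          fun j e => show M.add (a j) (b j) = M.add (a' j) (b' j) by rw [e.1, e.2])
  mul q r := Quotient.liftOn₂ q r (fun a b => Quotient.mk _ fun j => M.mul (a j) (b j))
    fun a b a' b' ha hb => Quotient.sound
      (((show ∀ᶠ j in (𝒰 : Filter J), a j = a' j from ha).and
        (show ∀ᶠ j in (𝒰 : Filter J), b j = b' j from hb)).mono
          fun j e => show M.mul (a j) (b j) = M.mul (a' j) (b' j) by rw [e.1, e.2])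
  opSat α χ s := ∀ᶠ j in (𝒰 : Filter J),
    (hStruc Set.univ (f j) M).opSat α χ fun k => (s k).out j

lemma opSat_uStruc (α : Ord2) (χ : LOO) (s : ℕ → (uStruc M 𝒰 f).U) :
    (uStruc M 𝒰 f).opSat α χ s =
      ∀ᶠ j in (𝒰 : Filter J), (hStruc Set.univ (f j) M).opSat α χ fun k => (s k).out j :=
  rfl

lemma mk_ae_eq (a b : J → M.U) :
    (Quotient.mk (uSetoid M 𝒰) a = Quotient.mk (uSetoid M 𝒰) b) ↔
      ∀ᶠ j in (𝒰 : Filter J), a j = b j :=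
  ⟨fun h => Quotient.exact h, fun h => Quotient.sound h⟩

lemma out_mk_ae (a : J → M.U) :
    ∀ᶠ j in (𝒰 : Filter J), (Quotient.mk (uSetoid M 𝒰) a).out j = a j :=
  (mk_ae_eq M 𝒰 _ _).mp (Quotient.out_eq _)

lemma eval_uStruc (sb : ℕ → J → M.U) (t : Term) :
    Term.eval (uStruc M 𝒰 f) (fun k => Quotient.mk (uSetoid M 𝒰) (sb k)) t
      = Quotient.mk (uSetoid M 𝒰) (fun j => Term.eval M (fun k => sb k j) t) := by
  induction t with
  | var k => rfl
  | zero => rfl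
  | succ t ih =>
    show (uStruc M 𝒰 f).succ (Term.eval _ _ t) = _
    rw [ih]; rfl
  | add t u ih1 ih2 =>
    show (uStruc M 𝒰 f).add (Term.eval _ _ t) (Term.eval _ _ u) = _
    rw [ih1, ih2]; rfl
  | mul t u ih1 ih2 =>
    show (uStruc M 𝒰 f).mul (Term.eval _ _ t) (Term.eval _ _ u) = _
    rw [ih1, ih2]; rfl

lemma update_mk (sb : ℕ → J → M.U) (x : ℕ) (g : J → M.U) :
    Function.update (fun k => Quotient.mk (uSetoid M 𝒰) (sb k)) x
        (Quotient.mk (uSetoid M 𝒰) g)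
      = fun k => Quotient.mk (uSetoid M 𝒰) (Function.update sb x g k) := by
  funext k
  rcases eq_or_ne k x with hk | hk
  · subst hk; simp
  · simp [Function.update_of_ne hk]

lemma update_proj (sb : ℕ → J → M.U) (x : ℕ) (g : J → M.U) (j : J) :
    (fun k => Function.update sb x g k j)
      = Function.update (fun k => sb k j) x (g j) := by
  funext k
  rcases eq_or_ne k x with hk | hk
  · subst hk; simp
  · simp [Function.update_of_ne hk]

/-- Łoś's theorem for the ultraproduct. -/
lemma los (hM : IsStruc M) (ψ : LOO) :
    ∀ sb : ℕ → J → M.U,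
      Sat (uStruc M 𝒰 f) ψ (fun k => Quotient.mk (uSetoid M 𝒰) (sb k)) ↔
        ∀ᶠ j in (𝒰 : Filter J),
          Sat (hStruc Set.univ (f j) M) ψ (fun k => sb k j) := by
  classical
  induction ψ with
  | eq t u =>
    intro sb
    show Term.eval _ _ t = Term.eval _ _ u ↔ _
    rw [eval_uStruc, eval_uStruc]; erw [mk_ae_eq]
    exact Filter.eventually_congr (Filter.Eventually.of_forall fun j => by
      show _ ↔ Term.eval _ _ t = Term.eval _ _ u
      rw [eval_hStruc, eval_hStruc]; exact Iff.rfl)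
  | imp φ χ ih1 ih2 =>
    intro sb
    show (Sat _ φ _ → Sat _ χ _) ↔ _
    rw [ih1 sb, ih2 sb]
    exact Ultrafilter.eventually_imp.symm
  | not φ ih =>
    intro sb
    show ¬ Sat _ φ _ ↔ _
    rw [ih sb]
    exact Ultrafilter.eventually_not.symm
  | all x φ ih =>
    intro sb
    show (∀ a : (uStruc M 𝒰 f).U, Sat _ φ (Function.update _ x a)) ↔ _
    constructor
    · intro H
      by_contra hcon
      rw [← Ultrafilter.eventually_not] at hcon
      set g : J → M.U := fun j =>
        if hj : ∃ a : M.U, ¬ Sat (hStruc Set.univ (f j) M) φ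
            (Function.update (fun k => sb k j) x a) then hj.choose else M.zero with hg
      have hgspec : ∀ᶠ j in (𝒰 : Filter J),
          ¬ Sat (hStruc Set.univ (f j) M) φ
            (Function.update (fun k => sb k j) x (g j)) := by
        refine hcon.mono fun j hj => ?_
        have hex : ∃ a : M.U, ¬ Sat (hStruc Set.univ (f j) M) φ
            (Function.update (fun k => sb k j) x a) := by
          by_contra hc
          push_neg at hc
          exact hj fun a => hc a
        rw [hg]
        simp only [dif_pos hex]
        exact hex.choose_spec
      have H' := H (Quotient.mk (uSetoid M 𝒰) g)
      erw [update_mk] at H'; rw [ih (Function.update sb x g)] at H'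
      have H'' : ∀ᶠ j in (𝒰 : Filter J),
          Sat (hStruc Set.univ (f j) M) φ
            (Function.update (fun k => sb k j) x (g j)) := by
        refine H'.mono fun j hj => ?_
        rwa [update_proj] at hj
      exact ((hgspec.and H'').exists).elim fun j hj => hj.1 hj.2
    · intro H a
      obtain ⟨g, rfl⟩ := Quotient.exists_rep a
      erw [update_mk]; rw [ih (Function.update sb x g)]
      refine H.mono fun j hj => ?_
      rw [update_proj]
      exact hj (g j)
  | op α χ =>
    intro sb
    show (∀ᶠ j in (𝒰 : Filter J),
        (hStruc Set.univ (f j) M).opSat α χ fun k =>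
          (Quotient.mk (uSetoid M 𝒰) (sb k)).out j) ↔ _
    have hall : ∀ᶠ j in (𝒰 : Filter J), ∀ k ∈ χ.free,
        (Quotient.mk (uSetoid M 𝒰) (sb k)).out j = sb k j :=
      (Filter.eventually_all_finite (Formula.free_finite χ)).mpr
        fun k _ => out_mk_ae M 𝒰 (sb k)
    refine Filter.eventually_congr (hall.mono fun j hj => ?_)
    exact (isStruc_hStruc Set.univ (f j) hM).1 α χ _ _ fun k hk => hj k hk

lemma isStruc_uStruc (hM : IsStruc M) : IsStruc (uStruc M 𝒰 f) := by
  have hN : ∀ j, IsStruc (hStruc Set.univ (f j) M) :=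
    fun j => isStruc_hStruc Set.univ (f j) hM
  refine ⟨?_, ?_, ?_⟩
  · intro K χ s t hst
    rw [opSat_uStruc, opSat_uStruc]
    refine Filter.eventually_congr (Filter.Eventually.of_forall fun j => ?_)
    exact (hN j).1 K χ _ _ fun x hx => by rw [hst x hx]
  · intro K χ χ' s hv
    rw [opSat_uStruc, opSat_uStruc]
    exact Filter.eventually_congr
      (Filter.Eventually.of_forall fun j => (hN j).2.1 K χ χ' _ hv)
  · intro K χ x y s hsub
    rw [opSat_uStruc, opSat_uStruc]
    refine Filter.eventually_congr (Filter.Eventually.of_forall fun j => ?_)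
    have heq : (fun k => ((Function.update s x (s y)) k).out j)
        = Function.update (fun k => (s k).out j) x ((s y).out j) := by
      funext k
      rcases eq_or_ne k x with hk | hk
      · subst hk; simp
      · simp [Function.update_of_ne hk]
    rw [heq]
    exact (hN j).2.2 K χ x y _ hsub

end UProd

section Collapsing

open Classical

variable (T : Set LOO) (n : ℕ)

/-- All ordinals occurring in a finite set of members of `T`. -/
noncomputable def OS (i : Finset {ψ : LOO // ψ ∈ T}) : Finset Ord2 :=
  i.sup fun ψ => Formula.onFin ψ.1

/-- A strict upper bound for the finite parts occurring in `OS`. -/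
noncomputable def CC (i : Finset {ψ : LOO // ψ ∈ T}) : ℕ :=
  ((OS T i).sup fun β => (ofLex β).2) + 1

/-- The collapsing function determined by a finite set of members of `T`:
fixes everything below `ω·n` and everything outside `OS T i`, and maps the
elements of `OS T i` above `ω·n` order-preservingly into the block `ω·(n-1)`. -/
noncomputable def hh (i : Finset {ψ : LOO // ψ ∈ T}) : Ord2 → Ord2 := fun β =>
  if (ofLex β).1 < n ∨ β ∉ OS T i then β
  else toLex (n - 1, CC T i * ((ofLex β).1 + 1) + (ofLex β).2)

lemma lt_omul_iff (β : Ord2) : β < omul n 0 ↔ (ofLex β).1 < n := by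
  constructor
  · intro h
    rcases Prod.Lex.lt_iff.mp h with h1 | ⟨_, h2⟩
    · exact h1
    · exact absurd h2 (Nat.not_lt_zero _)
  · intro h
    exact Prod.Lex.lt_iff.mpr (Or.inl h)

lemma hh_fix {i : Finset {ψ : LOO // ψ ∈ T}} {β : Ord2} (hβ : (ofLex β).1 < n) :
    hh T n i β = β := if_pos (Or.inl hβ)

lemma CC_bound {i : Finset {ψ : LOO // ψ ∈ T}} {β : Ord2} (hβ : β ∈ OS T i) :
    (ofLex β).2 < CC T i := by
  have h : (ofLex β).2 ≤ (OS T i).sup fun β => (ofLex β).2 := Finset.le_sup hβ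
  unfold CC
  omega

lemma hh_lt {i : Finset {ψ : LOO // ψ ∈ T}} {β : Ord2} (hn : 0 < n)
    (hβ : β ∈ OS T i) : hh T n i β < omul n 0 := by
  by_cases hsm : (ofLex β).1 < n
  · rw [hh_fix T n hsm]
    exact (lt_omul_iff n β).mpr hsm
  · rw [hh, if_neg (by simp [hsm, hβ])]
    exact Prod.Lex.lt_iff.mpr (Or.inl (by show n - 1 < n; omega))

lemma hh_mono {i : Finset {ψ : LOO // ψ ∈ T}} {β γ : Ord2}
    (hβ : β ∈ OS T i) (hγ : γ ∈ OS T i) (hlt : β < γ) :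
    hh T n i β < hh T n i γ := by
  have hb2 : (ofLex β).2 < CC T i := CC_bound T hβ
  by_cases hb : (ofLex β).1 < n <;> by_cases hc : (ofLex γ).1 < n
  · rw [hh_fix T n hb, hh_fix T n hc]; exact hlt
  · rw [hh_fix T n hb, hh, if_neg (by simp [hc, hγ])]
    rcases Nat.lt_or_ge (ofLex β).1 (n - 1) with ha | ha
    · exact Prod.Lex.lt_iff.mpr (Or.inl ha)
    · have ha2 : (ofLex β).1 = n - 1 := by omega
      refine Prod.Lex.lt_iff.mpr (Or.inr ⟨ha2, (?_ : (ofLex β).2 < CC T i * ((ofLex γ).1 + 1) + (ofLex γ).2)⟩)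
      have : CC T i ≤ CC T i * ((ofLex γ).1 + 1) := Nat.le_mul_of_pos_right _ (by omega)
      omega
  · exfalso
    rcases Prod.Lex.lt_iff.mp hlt with h | ⟨h, _⟩ <;> omega
  · rw [hh, if_neg (by simp [hb, hβ]), hh, if_neg (by simp [hc, hγ])]
    refine Prod.Lex.lt_iff.mpr (Or.inr ⟨rfl, (?_ : CC T i * ((ofLex β).1 + 1) + (ofLex β).2 < CC T i * ((ofLex γ).1 + 1) + (ofLex γ).2)⟩)
    rcases Prod.Lex.lt_iff.mp hlt with h | ⟨h, h2⟩
    · have h3 : CC T i * ((ofLex β).1 + 2) ≤ CC T i * ((ofLex γ).1 + 1) :=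
        Nat.mul_le_mul_left _ (by omega)
      have h4 : CC T i * ((ofLex β).1 + 2) = CC T i * ((ofLex β).1 + 1) + CC T i := by ring
      omega
    · rw [h]; omega

lemma On_subset_OS {ψ : LOO} (hψ : ψ ∈ T) {i : Finset {ψ : LOO // ψ ∈ T}}
    (hi : (⟨ψ, hψ⟩ : {ψ : LOO // ψ ∈ T}) ∈ i) {β : Ord2} (hβ : β ∈ ψ.On) :
    β ∈ OS T i := by
  have h1 : Formula.onFin ψ ≤ OS T i :=
    Finset.le_sup (f := fun ψ : {ψ : LOO // ψ ∈ T} => Formula.onFin ψ.1) hi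
  exact h1 (Formula.mem_onFin.mpr hβ)

end Collapsing

/-- The collapse theorem: for a uniform `L_{ω·ω}`-theory `T`, `0 < n`, and `φ`
with `On(φ) ⊆ ω·n`, `T ⊨ φ` iff `T∩(ω·n) ⊨ φ`. -/
theorem collapse_theorem (T : Set LOO) (hT : IsTheory T) (hU : Uniform T)
    (n : ℕ) (hn : 0 < n) (φ : LOO) (hφ : φ.On ⊆ {β : Ord2 | β < omul n 0}) :
    Models T φ ↔ Models (cut T (omul n 0)) φ := by
  classical
  constructor
  · -- the substantive direction: `T ⊨ φ → T∩(ω·n) ⊨ φ`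
    intro hTφ M hM hMc s
    obtain ⟨𝒰, h𝒰⟩ :=
      Ultrafilter.exists_le (Filter.atTop : Filter (Finset {ψ : LOO // ψ ∈ T}))
    set f : Finset {ψ : LOO // ψ ∈ T} → Ord2 → Ord2 := hh T n with hf
    have hmemU : ∀ (ψ : LOO) (hψ : ψ ∈ T),
        ∀ᶠ i in (𝒰 : Filter (Finset {ψ : LOO // ψ ∈ T})), (⟨ψ, hψ⟩ : {ψ : LOO // ψ ∈ T}) ∈ i := by
      intro ψ hψ
      have hat : ∀ᶠ i in (Filter.atTop : Filter (Finset {ψ : LOO // ψ ∈ T})),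
          (⟨ψ, hψ⟩ : {ψ : LOO // ψ ∈ T}) ∈ i :=
        Filter.eventually_atTop.mpr
          ⟨{⟨ψ, hψ⟩}, fun i hi => hi (Finset.mem_singleton_self _)⟩
      exact hat.filter_mono h𝒰
    have hkey : ∀ (ψ : LOO) (hψ : ψ ∈ T) (i : Finset {ψ : LOO // ψ ∈ T}),
        (⟨ψ, hψ⟩ : {ψ : LOO // ψ ∈ T}) ∈ i →
          mapOps Set.univ (f i) ψ ∈ cut T (omul n 0) := by
      intro ψ hψ i hi
      have hOP : OrdPresOn ψ.On (f i) := fun a ha b hb hab =>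
        hh_mono T n (On_subset_OS T hψ hi ha) (On_subset_OS T hψ hi hb) hab
      have h1 : mapOps ψ.On (f i) ψ ∈ T := hU ψ.On (f i) hOP ψ hψ (subset_refl _)
      rw [mapOps_eq_univ (subset_refl _)] at h1
      refine ⟨h1, ?_⟩
      intro β hβ
      obtain ⟨γ, hγ, rfl⟩ := On_mapOps ψ hβ
      exact hh_lt T n hn (On_subset_OS T hψ hi hγ)
    have hNs := isStruc_uStruc M 𝒰 f hM
    have hNsT : ∀ ψ ∈ T, ∀ t : ℕ → (uStruc M 𝒰 f).U, Sat (uStruc M 𝒰 f) ψ t := by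
      intro ψ hψ t
      have hev : ∀ᶠ i in (𝒰 : Filter (Finset {ψ : LOO // ψ ∈ T})),
          Sat (hStruc Set.univ (f i) M) ψ (fun k => (fun k j => (t k).out j) k i) := by
        refine (hmemU ψ hψ).mono fun i hi => ?_
        rw [Sat_hStruc]
        exact hMc _ (hkey ψ hψ i hi) _
      have := (los M 𝒰 f hM ψ (fun k j => (t k).out j)).mpr hev
      have ht : t = fun k => Quotient.mk (uSetoid M 𝒰) ((fun k j => (t k).out j) k) := by
        funext k
        exact (Quotient.out_eq (t k)).symm
      rw [ht]
      exact this
    have hmain := hTφ (uStruc M 𝒰 f) hNs hNsT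
      (fun k => Quotient.mk (uSetoid M 𝒰) ((fun k (_ : Finset {ψ : LOO // ψ ∈ T}) => s k) k))
    have hm2 := (los M 𝒰 f hM φ (fun k _ => s k)).mp hmain
    obtain ⟨i, hi⟩ := hm2.exists
    have hfix : ∀ β ∈ φ.On, f i β = β := fun β hβ =>
      hh_fix T n ((lt_omul_iff n β).mp (hφ hβ))
    have h3 := (Sat_hStruc Set.univ (f i) M φ _).mp hi
    rw [mapOps_fix hfix] at h3
    exact h3
  · -- the trivial direction
    intro h M hM hMT s
    exact h M hM (fun ψ hψ => hMT ψ hψ.1) s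

end FCT
end

section
/- (Upward proof stratification) For any L_EA-theory T, any L_EA-sentence φ, and any stratifier ⁺, the following are equivalent: (1) T ⊨ φ; (2) T⁺ ⊨ φ⁺, where T⁺ = {τ⁺ : τ ∈ T}; (3) T^⊕ ⊨ φ⁺. -/
namespace FCT

/-! ### Auxiliary lemmas for upward proof stratification -/

section Aux

/-- `down` preserves free variables. -/
lemma down_free (χ : LOO) : χ.down.free = χ.free := by
  induction χ <;> simp [Formula.down, Formula.free, *]

/-- `down` preserves alphabetic matching. -/
lemma down_alpha (χ : LOO) : ∀ (ξ : LOO) (ρ : List (ℕ × ℕ)),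
    χ.alpha ρ ξ → χ.down.alpha ρ ξ.down := by
  induction χ <;> intro ξ ρ h <;> cases ξ <;>
    simp_all [Formula.alpha, Formula.down]

/-- `down` commutes with substitution. -/
lemma down_subst (x : ℕ) (u : Term) (χ : LOO) :
    (χ.subst x u).down = χ.down.subst x u := by
  induction χ with
  | all y ψ ih =>
      by_cases h : y = x <;> simp [Formula.subst, Formula.down, h, ih]
  | _ => simp [Formula.subst, Formula.down, *]

/-- `down` preserves substitutability. -/
lemma down_substitutable (x : ℕ) (u : Term) (χ : LOO)
    (h : χ.Substitutable x u) : χ.down.Substitutable x u := by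
  induction χ <;> simp_all [Formula.Substitutable, Formula.down, down_free] <;> tauto

/-- Term evaluation in `downStruc M` agrees with that in `M`. -/
lemma eval_down (M : PreStruc Unit) (s : ℕ → M.U) (t : Term) :
    t.eval (downStruc M) s = t.eval M s := by
  induction t <;> (simp only [Term.eval, *]; try rfl)

/-- Satisfaction transfer for `downStruc`. -/
lemma sat_down (M : PreStruc Unit) (χ : LOO) :
    ∀ s : ℕ → M.U, Sat (downStruc M) χ s ↔ Sat M χ.down s := by
  induction χ with
  | eq t u => intro s; simp [Sat, Formula.down, eval_down]; exact Iff.rfl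
  | imp φ ψ ih1 ih2 => intro s; simp only [Sat, Formula.down]; rw [ih1, ih2]
  | not φ ih => intro s; simp only [Sat, Formula.down]; rw [ih]
  | all x φ ih =>
      intro s
      simp only [Sat, Formula.down]
      exact forall_congr' fun a => ih _
  | op K φ ih => intro s; exact Iff.rfl

/-- `downStruc` of a genuine structure is a genuine structure. -/
lemma isStruc_down (M : PreStruc Unit) (hM : IsStruc M) :
    IsStruc (downStruc M) := by
  obtain ⟨h1, h2, h3⟩ := hM
  refine ⟨?_, ?_, ?_⟩
  · intro K χ s t hst
    exact h1 () χ.down s t (by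
      intro x hx
      exact hst x (by rwa [down_free] at hx))
  · intro K χ ξ s hv
    exact h2 () χ.down ξ.down s (down_alpha χ ξ [] hv)
  · intro K χ x y s hsub
    have := h3 () χ.down x y s (down_substitutable x (.var y) χ hsub)
    show Sat M (.op () (χ.subst x (.var y)).down) s ↔
      Sat M (.op () χ.down) (Function.update s x (s y))
    rw [down_subst]
    exact this

/-- A stratification of an `L_EA`-formula "downs" back to the formula. -/
lemma down_stratify (X : Set Ord2) (ψ : LEA) : (stratify X ψ).down = ψ := by
  induction ψ <;> simp [stratify, Formula.down, *]

/-- `stratify` preserves free variables. -/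
lemma strat_free (X : Set Ord2) (ψ : LEA) : (stratify X ψ).free = ψ.free := by
  induction ψ <;> simp [stratify, Formula.free, *]

/-- Substitution does not change the set of occurring superscripts. -/
lemma On_subst (x : ℕ) (u : Term) (χ : LOO) : (χ.subst x u).On = χ.On := by
  induction χ with
  | all y ψ ih =>
      by_cases h : y = x <;> simp [Formula.subst, Formula.On, h, ih]
  | _ => simp [Formula.subst, Formula.On, *]

/-- `stratify` commutes with substitution. -/
lemma strat_subst (X : Set Ord2) (x : ℕ) (u : Term) (ψ : LEA) :
    stratify X (ψ.subst x u) = (stratify X ψ).subst x u := by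
  induction ψ with
  | all y ψ ih =>
      by_cases h : y = x <;> simp [Formula.subst, stratify, h, ih]
  | op K ψ ih =>
      simp [Formula.subst, stratify, ih, On_subst]
  | _ => simp [Formula.subst, stratify, *]

/-- `stratify` preserves substitutability. -/
lemma strat_substitutable (X : Set Ord2) (x : ℕ) (u : Term) (ψ : LEA)
    (h : ψ.Substitutable x u) : (stratify X ψ).Substitutable x u := by
  induction ψ <;> simp_all [Formula.Substitutable, stratify, strat_free] <;> tauto

/-- `stratify` preserves alphabetic matching and equates the superscript sets
of alphabetic variants. -/
lemma strat_alpha (X : Set Ord2) (ψ : LEA) : ∀ (ψ' : LEA) (ρ : List (ℕ × ℕ)),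
    ψ.alpha ρ ψ' → (stratify X ψ).alpha ρ (stratify X ψ') ∧
      (stratify X ψ).On = (stratify X ψ').On := by
  induction ψ with
  | eq t u =>
      intro ψ' ρ h
      cases ψ' <;> simp_all [Formula.alpha, stratify, Formula.On]
  | imp ψ₁ ψ₂ ih₁ ih₂ =>
      intro ψ' ρ h
      cases ψ' with
      | imp ξ₁ ξ₂ =>
          obtain ⟨h1, h2⟩ := h
          obtain ⟨a1, o1⟩ := ih₁ ξ₁ ρ h1
          obtain ⟨a2, o2⟩ := ih₂ ξ₂ ρ h2
          exact ⟨⟨a1, a2⟩, by simp only [stratify, Formula.On, o1, o2]⟩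
      | eq t u => exact h.elim
      | not ξ => exact h.elim
      | all y ξ => exact h.elim
      | op K ξ => exact h.elim
  | not ψ ih =>
      intro ψ' ρ h
      cases ψ' with
      | not ξ =>
          obtain ⟨a, o⟩ := ih ξ ρ h
          exact ⟨a, by simp only [stratify, Formula.On, o]⟩
      | eq t u => exact h.elim
      | imp ξ₁ ξ₂ => exact h.elim
      | all y ξ => exact h.elim
      | op K ξ => exact h.elim
  | all y ψ ih =>
      intro ψ' ρ h
      cases ψ' with
      | all y' ξ =>
          obtain ⟨a, o⟩ := ih ξ ((y, y') :: ρ) h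
          exact ⟨a, by simp only [stratify, Formula.On, o]⟩
      | eq t u => exact h.elim
      | imp ξ₁ ξ₂ => exact h.elim
      | not ξ => exact h.elim
      | op K ξ => exact h.elim
  | op K ψ ih =>
      intro ψ' ρ h
      cases ψ' with
      | op K' ξ =>
          obtain ⟨-, h2⟩ := h
          obtain ⟨a, o⟩ := ih ξ ρ h2
          exact ⟨⟨by rw [o], a⟩, by simp only [stratify, Formula.On, o]⟩
      | eq t u => exact h.elim
      | imp ξ₁ ξ₂ => exact h.elim
      | not ξ => exact h.elim
      | all y ξ => exact h.elim


/-- Term evaluation in `upStruc M f` agrees with that in `M`. -/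
lemma eval_up (M : PreStruc Ord2) (f : LEA → LOO) (s : ℕ → M.U) (t : Term) :
    t.eval (upStruc M f) s = t.eval M s := by
  induction t <;> (simp only [Term.eval, *]; try rfl)

/-- Satisfaction transfer for `upStruc`. -/
lemma sat_up (M : PreStruc Ord2) (X : Set Ord2) (ψ : LEA) :
    ∀ s : ℕ → M.U, Sat (upStruc M (stratify X)) ψ s ↔ Sat M (stratify X ψ) s := by
  induction ψ with
  | eq t u => intro s; simp only [Sat, stratify, eval_up]; exact Iff.rfl
  | imp φ ψ ih1 ih2 => intro s; simp only [Sat, stratify]; rw [ih1, ih2]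
  | not φ ih => intro s; simp only [Sat, stratify]; rw [ih]
  | all x φ ih =>
      intro s
      simp only [Sat, stratify]
      exact forall_congr' fun a => ih _
  | op K φ ih => intro s; exact Iff.rfl

/-- `upStruc` along a stratifier of a genuine structure is genuine. -/
lemma isStruc_up (M : PreStruc Ord2) (hM : IsStruc M) (X : Set Ord2) :
    IsStruc (upStruc M (stratify X)) := by
  obtain ⟨h1, h2, h3⟩ := hM
  refine ⟨?_, ?_, ?_⟩
  · intro K ψ s t hst
    exact h1 (leastIn (X \ (stratify X ψ).On)) (stratify X ψ) s t
      (fun x hx => hst x (by rwa [strat_free] at hx))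
  · intro K ψ ψ' s hv
    obtain ⟨a, o⟩ := strat_alpha X ψ ψ' [] hv
    show Sat M (.op (leastIn (X \ (stratify X ψ).On)) (stratify X ψ)) s ↔
      Sat M (.op (leastIn (X \ (stratify X ψ').On)) (stratify X ψ')) s
    rw [← o]
    exact h2 _ _ _ s a
  · intro K ψ x y s hsub
    show Sat M (.op (leastIn (X \ (stratify X (ψ.subst x (.var y))).On))
        (stratify X (ψ.subst x (.var y)))) s ↔
      Sat M (.op (leastIn (X \ (stratify X ψ).On)) (stratify X ψ))
        (Function.update s x (s y))
    rw [strat_subst, On_subst]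
    exact h3 _ _ x y s (strat_substitutable X x (.var y) ψ hsub)

end Aux

/-- Upward proof stratification: `T ⊨ φ` iff `T⁺ ⊨ φ⁺` iff `T^⊕ ⊨ φ⁺`. -/
theorem upward_proof_stratification (T : Set LEA) (hT : IsTheory T)
    (φ : LEA) (hφ : φ.IsSentence) (f : LEA → LOO) (hf : IsStratifier f) :
    (Models T φ ↔ Models (f '' T) (f φ)) ∧ (Models T φ ↔ Models (oplus T) (f φ)) := by
  obtain ⟨X, hX, rfl⟩ := hf
  have h12 : Models T (φ) → Models (stratify X '' T) (stratify X φ) := by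
    intro h M hM hMT s
    exact (sat_up M X φ s).mp (h (upStruc M (stratify X)) (isStruc_up M hM X)
      (fun τ hτ s' => (sat_up M X τ s').mpr (hMT _ ⟨τ, hτ, rfl⟩ s')) s)
  have h21 : Models (stratify X '' T) (stratify X φ) → Models T φ := by
    intro h M hM hMT s
    have key := h (downStruc M) (isStruc_down M hM)
      (by
        rintro ψ ⟨τ, hτ, rfl⟩ s'
        refine (sat_down M _ s').mpr ?_; rw [down_stratify]
        exact hMT τ hτ s') s
    rwa [sat_down, down_stratify] at key
  have h31 : Models (oplus T) (stratify X φ) → Models T φ := by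
    intro h M hM hMT s
    have key := h (downStruc M) (isStruc_down M hM)
      (by
        rintro ψ ⟨τ, hτ, g, ⟨Y, -, rfl⟩, rfl⟩ s'
        refine (sat_down M _ s').mpr ?_; rw [down_stratify]
        exact hMT τ hτ s') s
    rwa [sat_down, down_stratify] at key
  have h23 : Models (stratify X '' T) (stratify X φ) →
      Models (oplus T) (stratify X φ) := by
    intro h M hM hMT s
    refine h M hM (fun ψ hψ => ?_) s
    obtain ⟨τ, hτ, rfl⟩ := hψ
    exact hMT _ ⟨τ, hτ, stratify X, ⟨X, hX, rfl⟩, rfl⟩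
  exact ⟨⟨h12, h21⟩, ⟨fun h => h23 (h12 h), h31⟩⟩

end FCT
end
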